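/- arXiv:2105.02975 — 2 statements merged into one kernel-verified Lean document; each statement's English description precedes it below -/
import Mathlib

section
/- Let (U_n)_{n∈ℕ} be a sequence of open subsets of ℝ with [0,1] ⊆ ⋃_n U_n. Define δ : [0,1] → ℝ by δ(x) = (1/4)·Σ_{n∈ℕ} 2^{−n}·min(1, dist(x, ℝ∖U_n)). Then δ is continuous, δ(x) > 0 for all x ∈ [0,1], and for every p ∈ [0,1] and k ∈ ℕ: if δ(p) > 2^{−k}, then the open interval (p − δ(p), p + δ(p)) is contained in ⋃_{n≤k} U_n. -/
set_option maxHeartbeats 1000000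


/-- The gauge associated to a countable open cover `(U_n)` of `[0,1]`:
`δ(x) = (1/4)·Σ_n 2^{-n}·min(1, dist(x, ℝ∖U_n))`, where the distance to the empty set
is `+∞` (so the corresponding term is `1`). -/
noncomputable def coverGauge (U : ℕ → Set ℝ) (x : ℝ) : ℝ :=
  (1 / 4) * ∑' n : ℕ, (1 / 2 : ℝ) ^ n * (min 1 (EMetric.infEdist x (U n)ᶜ)).toReal

/-- If `(U_n)` is a sequence of open subsets of `ℝ` covering `[0,1]`, then the gauge
`δ(x) = (1/4)·Σ_n 2^{-n}·min(1, dist(x, ℝ∖U_n))` is continuous and positive on `[0,1]`,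
and for all `p ∈ [0,1]` and `k ∈ ℕ`, if `δ(p) > 2^{-k}` then
`(p - δ(p), p + δ(p)) ⊆ ⋃_{n ≤ k} U_n`. -/
theorem coverGauge_spec (U : ℕ → Set ℝ) (hU : ∀ n, IsOpen (U n))
    (hcov : Set.Icc (0:ℝ) 1 ⊆ ⋃ n, U n) :
    ContinuousOn (coverGauge U) (Set.Icc (0:ℝ) 1) ∧
    (∀ x ∈ Set.Icc (0:ℝ) 1, 0 < coverGauge U x) ∧
    ∀ p ∈ Set.Icc (0:ℝ) 1, ∀ k : ℕ, (1 / 2 : ℝ) ^ k < coverGauge U p →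
      Set.Ioo (p - coverGauge U p) (p + coverGauge U p) ⊆ ⋃ n ≤ k, U n := by
  set f : ℕ → ℝ → ℝ := fun n x => (min 1 (EMetric.infEdist x (U n)ᶜ)).toReal with hfdef
  have hne : ∀ n (x : ℝ), min 1 (EMetric.infEdist x (U n)ᶜ) ≠ ⊤ :=
    fun n x => ne_top_of_le_ne_top ENNReal.one_ne_top (min_le_left _ _)
  have hfle : ∀ n x, f n x ≤ 1 := by
    intro n x
    have := ENNReal.toReal_mono ENNReal.one_ne_top (min_le_left 1 (EMetric.infEdist x (U n)ᶜ))
    simpa using this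
  have hfnn : ∀ n x, 0 ≤ f n x := fun n x => ENNReal.toReal_nonneg
  have hgeo : Summable fun n : ℕ => (1/2 : ℝ)^n :=
    summable_geometric_of_lt_one (by norm_num) (by norm_num)
  have hgsum : ∀ x : ℝ, Summable fun n => (1/2 : ℝ)^n * f n x := by
    intro x
    refine Summable.of_nonneg_of_le (fun n => by positivity) (fun n => ?_) hgeo
    have h1 : (0:ℝ) ≤ (1/2:ℝ)^n := by positivity
    nlinarith [hfle n x, hfnn n x]
  have hcont : Continuous (coverGauge U) := by
    unfold coverGauge
    refine continuous_const.mul ?_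
    refine continuous_tsum (fun n => ?_) hgeo (fun n x => ?_)
    · refine continuous_const.mul ?_
      refine ENNReal.continuousOn_toReal.comp_continuous
        (continuous_const.min EMetric.continuous_infEdist) (fun x => hne n x)
    · have h1 : (0:ℝ) ≤ (1/2:ℝ)^n := by positivity
      rw [Real.norm_eq_abs, abs_of_nonneg (by positivity)]
      nlinarith [hfle n x, hfnn n x]
  have hpos : ∀ x ∈ Set.Icc (0:ℝ) 1, 0 < coverGauge U x := by
    intro x hx
    obtain ⟨n, hn⟩ := Set.mem_iUnion.mp (hcov hx)
    have hfpos : 0 < f n x := by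
      have h1 : 0 < EMetric.infEdist x (U n)ᶜ := by
        rw [show EMetric.infEdist x (U n)ᶜ = Metric.infEDist x (U n)ᶜ from rfl, EMetric.infEdist_pos_iff_notMem_closure, (hU n).isClosed_compl.closure_eq]
        simpa using hn
      exact ENNReal.toReal_pos (lt_min one_pos h1).ne' (hne n x)
    have hterm : (1/2:ℝ)^n * f n x ≤ ∑' m, (1/2:ℝ)^m * f m x :=
      Summable.le_tsum (hgsum x) n (fun m _ => by positivity)
    have h2 : 0 < (1/2:ℝ)^n * f n x := by positivity
    unfold coverGauge
    nlinarith
  refine ⟨hcont.continuousOn, hpos, ?_⟩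
  intro p hp k hk
  have hδpos : 0 < coverGauge U p := hpos p hp
  have hex : ∃ n ≤ k, coverGauge U p < f n p := by
    by_contra hcon
    push_neg at hcon
    have hsplit := Summable.sum_add_tsum_nat_add (f := fun n => (1/2:ℝ)^n * f n p) (k+1) (hgsum p)
    have h1 : ∑ i ∈ Finset.range (k+1), (1/2:ℝ)^i * f i p ≤ 2 * coverGauge U p := by
      have hs1 : ∑ i ∈ Finset.range (k+1), (1/2:ℝ)^i * f i p
          ≤ ∑ i ∈ Finset.range (k+1), (1/2:ℝ)^i * coverGauge U p := by
        refine Finset.sum_le_sum (fun i hi => ?_)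
        have := hcon i (Nat.lt_succ_iff.mp (Finset.mem_range.mp hi))
        have h1 : (0:ℝ) ≤ (1/2:ℝ)^i := by positivity
        nlinarith
      have hs2 : ∑ i ∈ Finset.range (k+1), (1/2:ℝ)^i * coverGauge U p
          = (∑ i ∈ Finset.range (k+1), (1/2:ℝ)^i) * coverGauge U p := by
        rw [Finset.sum_mul]
      have hs3 := sum_geometric_two_le (k+1)
      rw [hs2] at hs1
      nlinarith
    have htail : ∑' i : ℕ, (1/2:ℝ)^(i+(k+1)) * f (i+(k+1)) p ≤ (1/2:ℝ)^k := by
      have hsb : Summable fun i : ℕ => (1/2:ℝ)^(i+(k+1)) := by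
        simpa using (summable_nat_add_iff (k+1)).mpr hgeo
      have ht1 : ∑' i : ℕ, (1/2:ℝ)^(i+(k+1)) * f (i+(k+1)) p
          ≤ ∑' i : ℕ, (1/2:ℝ)^(i+(k+1)) := by
        refine Summable.tsum_le_tsum (fun i => ?_) ((summable_nat_add_iff (f := fun n => (1/2:ℝ)^n * f n p) (k+1)).mpr (hgsum p)) hsb
        have h1 : (0:ℝ) ≤ (1/2:ℝ)^(i+(k+1)) := by positivity
        nlinarith [hfle (i+(k+1)) p, hfnn (i+(k+1)) p]
      have ht2 : ∑' i : ℕ, (1/2:ℝ)^(i+(k+1)) = (1/2:ℝ)^k := by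
        calc ∑' i : ℕ, (1/2:ℝ)^(i+(k+1))
            = ∑' i : ℕ, (1/2:ℝ)^i * (1/2:ℝ)^(k+1) := tsum_congr (fun i => pow_add _ _ _)
          _ = (∑' i : ℕ, (1/2:ℝ)^i) * (1/2:ℝ)^(k+1) := tsum_mul_right
          _ = (1 - 1/2:ℝ)⁻¹ * (1/2:ℝ)^(k+1) := by
                rw [tsum_geometric_of_lt_one (by norm_num) (by norm_num)]
          _ = (1/2:ℝ)^k := by rw [pow_succ]; ring
      linarith
    have hδ : coverGauge U p = (1/4) * ∑' n, (1/2:ℝ)^n * f n p := rfl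
    rw [← hsplit] at hδ
    nlinarith
  obtain ⟨n, hnk, hfn⟩ := hex
  intro y hy
  refine Set.mem_iUnion₂.mpr ⟨n, hnk, ?_⟩
  by_contra hyn
  have h1 : EMetric.infEdist p (U n)ᶜ ≤ edist p y := EMetric.infEdist_le_edist_of_mem hyn
  have h2 : ENNReal.ofReal (coverGauge U p) < min 1 (EMetric.infEdist p (U n)ᶜ) :=
    (ENNReal.ofReal_lt_iff_lt_toReal hδpos.le (hne n p)).mpr hfn
  have h3 : edist p y < ENNReal.ofReal (coverGauge U p) := by
    rw [edist_dist, ENNReal.ofReal_lt_ofReal_iff hδpos]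
    rw [Real.dist_eq, abs_lt]
    obtain ⟨hy1, hy2⟩ := hy
    constructor <;> linarith
  exact absurd (h3.trans (h2.trans_le ((min_le_right _ _).trans h1))) (lt_irrefl _)
end

section
/- Let X and Y be metric spaces, let (f_n) be a sequence of continuous functions from X to Y converging pointwise to a function f : X → Y, and let U ⊆ Y be open. Then f^{−1}(U) is an F_σ set, i.e., a countable union of closed subsets of X. -/
open Filter Topology ENNReal

/-- If `f : X → Y` (between metric spaces) is Baire class 1, i.e. the pointwise limit of
a sequence of continuous functions, then the preimage of every open set `U ⊆ Y` under `f`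
is an `F_σ` set: a countable union of closed subsets of `X`. -/
theorem baire_one_preimage_open_Fsigma {X Y : Type*} [MetricSpace X] [MetricSpace Y]
    (f : X → Y) (g : ℕ → X → Y) (hg : ∀ n, Continuous (g n))
    (hlim : ∀ x, Tendsto (fun n => g n x) atTop (𝓝 (f x)))
    (U : Set Y) (hU : IsOpen U) :
    ∃ F : ℕ → Set X, (∀ n, IsClosed (F n)) ∧ f ⁻¹' U = ⋃ n, F n := by
  -- closed sets C m = {y | m⁻¹ ≤ infEdist y Uᶜ}
  set C : ℕ → Set Y := fun m => {y | ((m : ℝ≥0∞))⁻¹ ≤ EMetric.infEdist y Uᶜ} with hC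
  have hCclosed : ∀ m, IsClosed (C m) := fun m =>
    isClosed_le continuous_const (EMetric.continuous_infEdist)
  set G : ℕ × ℕ → Set X := fun p => ⋂ n ∈ Set.Ici p.2, (g n) ⁻¹' (C p.1) with hG
  have hGclosed : ∀ p, IsClosed (G p) := fun p =>
    isClosed_biInter fun n _ => (hCclosed p.1).preimage (hg n)
  refine ⟨fun k => G ((Denumerable.eqv (ℕ × ℕ)).symm k), fun k => hGclosed _, ?_⟩
  ext x
  simp only [Set.mem_preimage, Set.mem_iUnion]
  constructor
  · intro hx
    have hne : EMetric.infEdist (f x) Uᶜ ≠ 0 := by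
      intro h0
      exact ((EMetric.mem_iff_infEdist_zero_of_closed hU.isClosed_compl).2 h0) hx
    obtain ⟨m, hm⟩ := ENNReal.exists_inv_nat_lt hne
    have hev : ∀ᶠ n in atTop, ((m : ℝ≥0∞))⁻¹ < EMetric.infEdist (g n x) Uᶜ :=
      ((EMetric.continuous_infEdist.tendsto _).comp (hlim x)).eventually
        (eventually_gt_nhds hm)
    obtain ⟨N, hN⟩ := hev.exists_forall_of_atTop
    refine ⟨(Denumerable.eqv (ℕ × ℕ)) (m, N), ?_⟩
    rw [Equiv.symm_apply_apply]
    exact Set.mem_iInter₂.2 fun n hn => le_of_lt (hN n hn)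
  · rintro ⟨k, hk⟩
    set p := (Denumerable.eqv (ℕ × ℕ)).symm k with hp
    have hmem : ∀ n ≥ p.2, ((p.1 : ℝ≥0∞))⁻¹ ≤ EMetric.infEdist (g n x) Uᶜ :=
      fun n hn => Set.mem_iInter₂.1 hk n hn
    have hle : ((p.1 : ℝ≥0∞))⁻¹ ≤ EMetric.infEdist (f x) Uᶜ :=
      ge_of_tendsto ((EMetric.continuous_infEdist.tendsto _).comp (hlim x))
        (eventually_atTop.2 ⟨p.2, hmem⟩)
    have hpos : (0 : ℝ≥0∞) < ((p.1 : ℝ≥0∞))⁻¹ :=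
      ENNReal.inv_pos.2 (ENNReal.natCast_ne_top _)
    by_contra hxc
    rw [← Set.mem_compl_iff] at hxc
    have : EMetric.infEdist (f x) Uᶜ = 0 := EMetric.infEdist_zero_of_mem hxc
    exact absurd (this ▸ (lt_of_lt_of_le hpos hle)) (lt_irrefl _)
end
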